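/- As h → 0⁺ one has the limits I_0(h) → 4/3, I_2(h) → 16/15, and I'_4(h) → 16/3, i.e. the three complete elliptic integrals extend continuously to h = 0 with these values (the values of the corresponding integrals along one loop of the figure-eight level curve {H = 0}). -/

import Mathlib

open Real Set Filter intervalIntegral

/-- Right endpoint of the exterior oval: `x_max(h) = √(1 + √(1+4h))`. -/
noncomputable def xmax (h : ℝ) : ℝ := Real.sqrt (1 + Real.sqrt (1 + 4*h))

/-- Complete elliptic integral `I_i(h) = ∫_{-x_max}^{x_max} x^i √(2h + x² - x⁴/2) dx`. -/
noncomputable def ellI (i : ℕ) (h : ℝ) : ℝ :=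
  ∫ x in (-xmax h)..(xmax h), x^i * Real.sqrt (2*h + x^2 - x^4/2)

/-- Complete elliptic integral `I'_i(h) = ∫_{-x_max}^{x_max} x^i (2h + x² - x⁴/2)^{-1/2} dx`. -/
noncomputable def ellI' (i : ℕ) (h : ℝ) : ℝ :=
  ∫ x in (-xmax h)..(xmax h), x^i / Real.sqrt (2*h + x^2 - x^4/2)

open MeasureTheory

lemma xmax_sq (h : ℝ) : xmax h ^ 2 = 1 + Real.sqrt (1 + 4*h) :=
  Real.sq_sqrt (by positivity)

lemma sqrt14_sq {h : ℝ} (h0 : 0 ≤ h) : Real.sqrt (1 + 4*h) ^ 2 = 1 + 4*h :=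
  Real.sq_sqrt (by linarith)

lemma sqrt14_ge {h : ℝ} (h0 : 0 ≤ h) : 1 ≤ Real.sqrt (1 + 4*h) := by
  nlinarith [sqrt14_sq h0, Real.sqrt_nonneg (1 + 4*h)]

lemma xmax_nonneg (h : ℝ) : 0 ≤ xmax h := Real.sqrt_nonneg _

lemma xmax_ge_one {h : ℝ} (h0 : 0 ≤ h) : 1 ≤ xmax h := by
  nlinarith [xmax_sq h, sqrt14_ge h0, xmax_nonneg h]

lemma sqrt14_le {h : ℝ} (h0 : 0 ≤ h) (h1 : h ≤ 1) : Real.sqrt (1+4*h) ≤ 3 := by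
  nlinarith [sqrt14_sq h0, Real.sqrt_nonneg (1+4*h)]

lemma xmax_le_two {h : ℝ} (h0 : 0 ≤ h) (h1 : h ≤ 1) : xmax h ≤ 2 := by
  nlinarith [xmax_sq h, sqrt14_le h0 h1, xmax_nonneg h]

lemma arg_nonpos {h x : ℝ} (h0 : 0 ≤ h) (hx : xmax h ^ 2 ≤ x ^ 2) :
    2*h + x^2 - x^4/2 ≤ 0 := by
  have hs := sqrt14_sq h0
  have hs1 := sqrt14_ge h0
  have hx2 := xmax_sq h
  have h1 : 0 ≤ x^2 - (1 + Real.sqrt (1+4*h)) := by nlinarith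
  have h2 : 0 ≤ x^2 + (Real.sqrt (1+4*h) - 1) := by nlinarith
  nlinarith [mul_nonneg h1 h2]

lemma quad_factor {A s h t : ℝ} (hA : A = 1 + s) (hs : s^2 = 1 + 4*h) :
    2*h + A*t^2 - A^2*t^4/2 = A/2 * (1 - t^2) * (A*t^2 + (s - 1)) := by
  subst hA; linear_combination (-1/2 : ℝ) * hs

lemma D_factor {h : ℝ} (h0 : 0 ≤ h) (t : ℝ) :
    2*h + (xmax h*t)^2 - (xmax h*t)^4/2
      = (xmax h)^2/2 * (1 - t^2) * ((xmax h)^2*t^2 + (Real.sqrt (1+4*h) - 1)) := by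
  have := quad_factor (A := (xmax h)^2) (xmax_sq h) (sqrt14_sq h0) (t := t)
  linear_combination this

lemma sqrt_two_sq : Real.sqrt 2 ^ 2 = 2 := Real.sq_sqrt (by norm_num)

lemma xmax_zero : xmax 0 = Real.sqrt 2 := by
  rw [xmax]; norm_num [Real.sqrt_one]

lemma integrand_cont (i : ℕ) (h : ℝ) :
    Continuous fun x : ℝ => x^i * Real.sqrt (2*h + x^2 - x^4/2) :=
  (continuous_pow i).mul (Real.continuous_sqrt.comp (by continuity))

lemma ellI_eq_fixed (i : ℕ) {h : ℝ} (h0 : 0 ≤ h) (h1 : h ≤ 1) :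
    ellI i h = ∫ x in (-2:ℝ)..2, x^i * Real.sqrt (2*h + x^2 - x^4/2) := by
  have hint : ∀ a b : ℝ,
      IntervalIntegrable (fun x : ℝ => x^i * Real.sqrt (2*h + x^2 - x^4/2)) volume a b :=
    fun a b => (integrand_cont i h).intervalIntegrable a b
  have ha1 := xmax_ge_one h0
  have ha2 := xmax_le_two h0 h1
  have hzero : ∀ x : ℝ, xmax h ^ 2 ≤ x ^ 2 →
      x^i * Real.sqrt (2*h + x^2 - x^4/2) = 0 := by
    intro x hx
    rw [Real.sqrt_eq_zero_of_nonpos (arg_nonpos h0 hx), mul_zero]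
  have hleft : (∫ x in (-2:ℝ)..(-xmax h), x^i * Real.sqrt (2*h + x^2 - x^4/2)) = 0 := by
    rw [intervalIntegral.integral_congr (g := fun _ => (0:ℝ))
      (fun x hx => by
        rw [uIcc_of_le (by linarith)] at hx
        exact hzero x (by nlinarith [hx.1, hx.2]))]
    simp
  have hright : (∫ x in (xmax h)..(2:ℝ), x^i * Real.sqrt (2*h + x^2 - x^4/2)) = 0 := by
    rw [intervalIntegral.integral_congr (g := fun _ => (0:ℝ))
      (fun x hx => by
        rw [uIcc_of_le (by linarith)] at hx
        exact hzero x (by nlinarith [hx.1, hx.2]))]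
    simp
  have e1 := intervalIntegral.integral_add_adjacent_intervals
    (hint (-2) (-xmax h)) (hint (-xmax h) (xmax h))
  have e2 := intervalIntegral.integral_add_adjacent_intervals
    (hint (-2) (xmax h)) (hint (xmax h) 2)
  rw [ellI]
  linarith [e1, e2]

lemma ellI_tendsto (i : ℕ) (hi : i ≤ 2) :
    Tendsto (ellI i) (nhdsWithin 0 (Ioi 0))
      (nhds (∫ x in (-2:ℝ)..2, x^i * Real.sqrt (2*0 + x^2 - x^4/2))) := by
  have hmem : Ioc (0:ℝ) 1 ∈ nhdsWithin (0:ℝ) (Ioi 0) :=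
    Ioc_mem_nhdsGT_of_mem ⟨le_refl 0, one_pos⟩
  have hmain : Tendsto (fun h => ∫ x in (-2:ℝ)..2, x^i * Real.sqrt (2*h + x^2 - x^4/2))
      (nhdsWithin 0 (Ioi 0))
      (nhds (∫ x in (-2:ℝ)..2, x^i * Real.sqrt (2*0 + x^2 - x^4/2))) := by
    apply intervalIntegral.tendsto_integral_filter_of_dominated_convergence
      (bound := fun _ => (12:ℝ))
    · filter_upwards with h
      exact ((integrand_cont i h).aestronglyMeasurable).restrict
    · filter_upwards [hmem] with h hh
      refine Eventually.of_forall fun x hx => ?_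
      rw [uIoc_of_le (by norm_num)] at hx
      have hx2 : x^2 ≤ 4 := by nlinarith [hx.1, hx.2]
      have harg : 2*h + x^2 - x^4/2 ≤ 9 := by nlinarith [hh.2, sq_nonneg (x^2)]
      have h3 : Real.sqrt (2*h + x^2 - x^4/2) ≤ 3 := by
        calc Real.sqrt (2*h + x^2 - x^4/2) ≤ Real.sqrt 9 := Real.sqrt_le_sqrt harg
        _ = 3 := by rw [show (9:ℝ) = 3^2 by norm_num, Real.sqrt_sq (by norm_num)]
      have habs : |x| ≤ 2 := abs_le.mpr ⟨by linarith [hx.1], hx.2⟩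
      have hpow : |x|^i ≤ 4 := by
        calc |x|^i ≤ 2^i := pow_le_pow_left₀ (abs_nonneg x) habs i
        _ ≤ 2^2 := pow_le_pow_right₀ (by norm_num) hi
        _ = 4 := by norm_num
      rw [Real.norm_eq_abs, abs_mul, abs_pow, abs_of_nonneg (Real.sqrt_nonneg _)]
      calc |x|^i * Real.sqrt (2*h + x^2 - x^4/2) ≤ 4 * 3 :=
        mul_le_mul hpow h3 (Real.sqrt_nonneg _) (by norm_num)
      _ = 12 := by norm_num
    · exact intervalIntegrable_const
    · refine Eventually.of_forall fun x hx => ?_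
      have hc : Continuous fun h : ℝ => x^i * Real.sqrt (2*h + x^2 - x^4/2) :=
        continuous_const.mul (Real.continuous_sqrt.comp (by continuity))
      exact (hc.tendsto 0).mono_left nhdsWithin_le_nhds
  refine hmain.congr' ?_
  filter_upwards [hmem] with h hh
  exact (ellI_eq_fixed i hh.1.le hh.2).symm

-- even reduction: ∫_{-√2}^{√2} f = 2 * ∫_0^{√2} f  for the concrete integrands
lemma even_reduce (i : ℕ) :
    (∫ x in (-Real.sqrt 2)..(Real.sqrt 2), x^i * Real.sqrt (2*0 + x^2 - x^4/2))
      = (∫ x in (0:ℝ)..(Real.sqrt 2), x^i * Real.sqrt (2*0 + x^2 - x^4/2))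
        + ∫ x in (0:ℝ)..(Real.sqrt 2), (-x)^i * Real.sqrt (2*0 + x^2 - x^4/2) := by
  have hint : ∀ a b : ℝ,
      IntervalIntegrable (fun x : ℝ => x^i * Real.sqrt (2*0 + x^2 - x^4/2)) volume a b :=
    fun a b => (integrand_cont i 0).intervalIntegrable a b
  have hsplit := intervalIntegral.integral_add_adjacent_intervals
    (hint (-Real.sqrt 2) 0) (hint 0 (Real.sqrt 2))
  have hneg := intervalIntegral.integral_comp_neg
    (a := (0:ℝ)) (b := Real.sqrt 2) (fun x : ℝ => x^i * Real.sqrt (2*0 + x^2 - x^4/2))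
  simp only [neg_zero] at hneg
  have : (∫ x in (0:ℝ)..(Real.sqrt 2), (-x)^i * Real.sqrt (2*0 + (-x)^2 - (-x)^4/2))
      = ∫ x in (-Real.sqrt 2)..(0:ℝ), x^i * Real.sqrt (2*0 + x^2 - x^4/2) := hneg
  rw [intervalIntegral.integral_congr
    (g := fun x : ℝ => (-x)^i * Real.sqrt (2*0 + x^2 - x^4/2)) (fun x _ => by
      rw [show (-x)^2 = x^2 by ring, show (-x)^4 = x^4 by ring]) ] at this
  linarith [hsplit, this]

lemma deriv_aux0 (x : ℝ) :
    HasDerivAt (fun x : ℝ => -(2/3) * (1 - x^2/2) ^ (3/2 : ℝ))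
      (x * Real.sqrt (1 - x^2/2)) x := by
  have h1 : HasDerivAt (fun x : ℝ => 1 - x^2/2) (-x) x := by
    have := ((hasDerivAt_pow 2 x).div_const 2).const_sub 1
    simpa using this.congr_deriv (by ring)
  have h2 : HasDerivAt (fun u : ℝ => u ^ (3/2:ℝ))
      ((3/2) * (1 - x^2/2) ^ ((3:ℝ)/2 - 1)) (1 - x^2/2) :=
    Real.hasDerivAt_rpow_const (Or.inr (by norm_num))
  have h3 := (h2.comp x h1).const_mul (-(2/3) : ℝ)
  have heq : -(2/3) * ((3/2) * (1 - x^2/2) ^ ((3:ℝ)/2 - 1) * (-x))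
      = x * Real.sqrt (1 - x^2/2) := by
    rw [show (3:ℝ)/2 - 1 = 1/2 by norm_num, Real.sqrt_eq_rpow]
    ring
  simpa [Function.comp] using h3.congr_deriv heq

lemma deriv_aux2 {x : ℝ} (hx : 0 ≤ 1 - x^2/2) :
    HasDerivAt (fun x : ℝ => -(4/3) * (1 - x^2/2) ^ (3/2 : ℝ)
        + (4/5) * (1 - x^2/2) ^ (5/2 : ℝ))
      (x^3 * Real.sqrt (1 - x^2/2)) x := by
  have h1 : HasDerivAt (fun x : ℝ => 1 - x^2/2) (-x) x := by
    have := ((hasDerivAt_pow 2 x).div_const 2).const_sub 1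
    simpa using this.congr_deriv (by ring)
  have h2 : HasDerivAt (fun u : ℝ => u ^ (3/2:ℝ))
      ((3/2) * (1 - x^2/2) ^ ((3:ℝ)/2 - 1)) (1 - x^2/2) :=
    Real.hasDerivAt_rpow_const (Or.inr (by norm_num))
  have h4 : HasDerivAt (fun u : ℝ => u ^ (5/2:ℝ))
      ((5/2) * (1 - x^2/2) ^ ((5:ℝ)/2 - 1)) (1 - x^2/2) :=
    Real.hasDerivAt_rpow_const (Or.inr (by norm_num))
  have h5 := ((h2.comp x h1).const_mul (-(4/3) : ℝ)).add
    ((h4.comp x h1).const_mul ((4/5) : ℝ))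
  have e32 : (1 - x^2/2) ^ ((3:ℝ)/2 - 1) = Real.sqrt (1 - x^2/2) := by
    rw [show (3:ℝ)/2 - 1 = 1/2 by norm_num, Real.sqrt_eq_rpow]
  have e52 : (1 - x^2/2) ^ ((5:ℝ)/2 - 1) = (1 - x^2/2) * Real.sqrt (1 - x^2/2) := by
    rw [show (5:ℝ)/2 - 1 = 1 + 1/2 by norm_num, Real.rpow_add' hx (by norm_num),
      Real.rpow_one, Real.sqrt_eq_rpow]
  have heq : -(4/3) * ((3/2) * (1 - x^2/2) ^ ((3:ℝ)/2 - 1) * (-x))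
      + (4/5) * ((5/2) * (1 - x^2/2) ^ ((5:ℝ)/2 - 1) * (-x))
      = x^3 * Real.sqrt (1 - x^2/2) := by
    rw [e32, e52]; ring
  exact h5.congr_deriv heq

lemma half_val0 :
    (∫ x in (0:ℝ)..(Real.sqrt 2), x^0 * Real.sqrt (2*0 + x^2 - x^4/2)) = 2/3 := by
  have hcongr : EqOn (fun x : ℝ => x^0 * Real.sqrt (2*0 + x^2 - x^4/2))
      (fun x : ℝ => x * Real.sqrt (1 - x^2/2)) (uIcc 0 (Real.sqrt 2)) := by
    intro x hx
    rw [uIcc_of_le (Real.sqrt_nonneg 2)] at hx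
    simp only [pow_zero, one_mul]
    rw [show 2*0 + x^2 - x^4/2 = x^2 * (1 - x^2/2) by ring,
      Real.sqrt_mul (sq_nonneg x), Real.sqrt_sq hx.1]
  rw [intervalIntegral.integral_congr hcongr]
  rw [intervalIntegral.integral_eq_sub_of_hasDerivAt
    (fun x _ => deriv_aux0 x)
    (((continuous_id.mul (Real.continuous_sqrt.comp (by continuity)))).intervalIntegrable 0 _)]
  rw [show 1 - Real.sqrt 2 ^2/2 = 0 by rw [sqrt_two_sq]; norm_num]
  norm_num [Real.zero_rpow, Real.one_rpow]

lemma half_val2 :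
    (∫ x in (0:ℝ)..(Real.sqrt 2), x^2 * Real.sqrt (2*0 + x^2 - x^4/2)) = 8/15 := by
  have hcongr : EqOn (fun x : ℝ => x^2 * Real.sqrt (2*0 + x^2 - x^4/2))
      (fun x : ℝ => x^3 * Real.sqrt (1 - x^2/2)) (uIcc 0 (Real.sqrt 2)) := by
    intro x hx
    rw [uIcc_of_le (Real.sqrt_nonneg 2)] at hx
    show x^2 * Real.sqrt (2*0 + x^2 - x^4/2) = x^3 * Real.sqrt (1 - x^2/2)
    rw [show 2*0 + x^2 - x^4/2 = x^2 * (1 - x^2/2) by ring,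
      Real.sqrt_mul (sq_nonneg x), Real.sqrt_sq hx.1]
    ring
  rw [intervalIntegral.integral_congr hcongr]
  have hd : ∀ x ∈ uIcc (0:ℝ) (Real.sqrt 2),
      HasDerivAt (fun x : ℝ => -(4/3) * (1 - x^2/2) ^ (3/2 : ℝ)
        + (4/5) * (1 - x^2/2) ^ (5/2 : ℝ)) (x^3 * Real.sqrt (1 - x^2/2)) x := by
    intro x hx
    rw [uIcc_of_le (Real.sqrt_nonneg 2)] at hx
    have : x^2 ≤ 2 := by
      nlinarith [hx.1, hx.2, sqrt_two_sq]
    exact deriv_aux2 (by linarith)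
  rw [intervalIntegral.integral_eq_sub_of_hasDerivAt hd
    (((continuous_pow 3).mul (Real.continuous_sqrt.comp (by continuity))).intervalIntegrable 0 _)]
  rw [show 1 - Real.sqrt 2 ^2/2 = 0 by rw [sqrt_two_sq]; norm_num]
  norm_num [Real.zero_rpow, Real.one_rpow]

lemma meas_one_div_sqrt (a b : ℝ) :
    AEStronglyMeasurable (fun t : ℝ => 1 / Real.sqrt (1 - t^2))
      (volume.restrict (Set.uIoc a b)) :=
  (measurable_const.div
    ((Real.continuous_sqrt.comp (by continuity)).measurable)).aestronglyMeasurable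

lemma intInt_one_div_sqrt :
    IntervalIntegrable (fun t : ℝ => 1 / Real.sqrt (1 - t^2)) volume (-1) 1 := by
  have hright : IntervalIntegrable (fun t : ℝ => 1 / Real.sqrt (1 - t^2)) volume 0 1 := by
    have hg : IntervalIntegrable (fun t : ℝ => (1 - t) ^ (-(1/2) : ℝ)) volume 0 1 := by
      have := (intervalIntegrable_rpow' (r := -(1/2)) (by norm_num) (a := 0) (b := 1)).comp_sub_left 1
      simpa using this.symm
    apply hg.mono_fun (meas_one_div_sqrt 0 1)
    rw [Filter.EventuallyLE, MeasureTheory.ae_restrict_iff' measurableSet_uIoc]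
    refine Eventually.of_forall fun t ht => ?_
    rw [uIoc_of_le (by norm_num)] at ht
    rcases eq_or_lt_of_le ht.2 with h1 | h1
    · subst h1
      norm_num [Real.sqrt_zero, Real.zero_rpow (show (-(1/2):ℝ) ≠ 0 by norm_num)]
    · have h1t : (0:ℝ) < 1 - t := by linarith
      have hle : 1 - t ≤ 1 - t^2 := by nlinarith [ht.1]
      have hsp : 0 < Real.sqrt (1 - t) := Real.sqrt_pos.mpr h1t
      have hmono : Real.sqrt (1 - t) ≤ Real.sqrt (1 - t^2) := Real.sqrt_le_sqrt hle
      have e : (1 - t) ^ (-(1/2) : ℝ) = 1 / Real.sqrt (1 - t) := by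
        rw [Real.rpow_neg h1t.le, Real.sqrt_eq_rpow]
        norm_num
      rw [Real.norm_eq_abs, Real.norm_eq_abs, abs_of_nonneg (by positivity),
        abs_of_nonneg (by positivity), e]
      exact one_div_le_one_div_of_le hsp hmono
  have hleft : IntervalIntegrable (fun t : ℝ => 1 / Real.sqrt (1 - t^2)) volume (-1) 0 := by
    have := (IntervalIntegrable.iff_comp_neg (by simp)).mp hright
    simp only [neg_zero] at this
    have h2 : (fun x : ℝ => 1 / Real.sqrt (1 - (-x)^2)) = fun t : ℝ => 1 / Real.sqrt (1 - t^2) := by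
      funext x; rw [show (-x)^2 = x^2 by ring]
    rw [h2] at this
    exact this.symm
  exact hleft.trans hright

noncomputable def Faux (h t : ℝ) : ℝ :=
  xmax h * ((xmax h * t)^4 / Real.sqrt (2*h + (xmax h*t)^2 - (xmax h*t)^4/2))

lemma ellI'_eq {h : ℝ} (h0 : 0 ≤ h) : ellI' 4 h = ∫ t in (-1:ℝ)..1, Faux h t := by
  have hne : xmax h ≠ 0 := by
    have := xmax_ge_one h0; intro e; rw [e] at this; linarith
  have hcomp := intervalIntegral.integral_comp_mul_left
    (a := (-1:ℝ)) (b := 1) (c := xmax h)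
    (f := fun x : ℝ => x^4 / Real.sqrt (2*h + x^2 - x^4/2)) hne
  unfold Faux
  rw [intervalIntegral.integral_const_mul, hcomp, mul_neg_one, mul_one, smul_eq_mul,
    mul_inv_cancel_left₀ hne]
  rfl

lemma Faux_one {h : ℝ} (h0 : 0 ≤ h) : Faux h 1 = 0 := by
  unfold Faux
  rw [show 2*h + (xmax h*1)^2 - (xmax h*1)^4/2 = 0 by rw [D_factor h0]; ring,
    Real.sqrt_zero, div_zero, mul_zero]

lemma Faux_zero_eval (h : ℝ) : Faux h 0 = 0 := by
  unfold Faux; simp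

lemma sqrt2_arg (t : ℝ) :
    2*0 + (Real.sqrt 2*t)^2 - (Real.sqrt 2*t)^4/2 = 2*t^2*(1-t^2) := by
  have h2 := sqrt_two_sq
  linear_combination (t^2 - t^4/2*(Real.sqrt 2^2+2)) * h2

lemma Faux_zero {t : ℝ} (ht : t ∈ Icc (-1:ℝ) 1) :
    Faux 0 t = 4*|t|^3 / Real.sqrt (1 - t^2) := by
  unfold Faux
  rw [xmax_zero, sqrt2_arg]
  have habs4 : t^4 = |t|^4 := by
    rw [pow_abs, abs_of_nonneg (by positivity)]
  have hnum : (Real.sqrt 2 * t)^4 = 4 * t^4 := by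
    rw [mul_pow, show Real.sqrt 2 ^4 = (Real.sqrt 2^2)^2 by ring, sqrt_two_sq]; norm_num
  rw [show 2*t^2*(1-t^2) = (2*t^2)*(1-t^2) by ring, Real.sqrt_mul (by positivity),
    show (2:ℝ)*t^2 = 2*t^2 by ring]
  have h2t : Real.sqrt (2*t^2) = Real.sqrt 2 * |t| := by
    rw [Real.sqrt_mul (by norm_num), Real.sqrt_sq_eq_abs]
  rw [h2t, hnum]
  rcases eq_or_ne t 0 with h0 | h0
  · simp [h0]
  rcases eq_or_ne (Real.sqrt (1 - t^2)) 0 with hu | hu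
  · rw [hu]; simp
  have habs : (0:ℝ) < |t| := abs_pos.mpr h0
  have hs2 : (0:ℝ) < Real.sqrt 2 := Real.sqrt_pos.mpr (by norm_num)
  field_simp
  rw [habs4]

lemma xmax_cont : Continuous xmax :=
  Real.continuous_sqrt.comp (continuous_const.add (Real.continuous_sqrt.comp (by continuity)))

lemma Faux_tendsto {t : ℝ} (ht : t ∈ Ioc (-1:ℝ) 1) :
    Tendsto (fun h => Faux h t) (nhdsWithin 0 (Ioi 0)) (nhds (Faux 0 t)) := by
  rcases eq_or_lt_of_le ht.2 with h1 | h1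
  · subst h1
    refine Tendsto.congr' ?_ tendsto_const_nhds
    filter_upwards [self_mem_nhdsWithin] with h hh
    rw [Faux_one le_rfl, Faux_one hh.le]
  · rcases eq_or_ne t 0 with ht0 | ht0
    · subst ht0
      refine Tendsto.congr (fun h => (Faux_zero_eval h).symm) ?_
      rw [Faux_zero_eval 0]
      exact tendsto_const_nhds
    · have harg : (0:ℝ) < 2*0 + (xmax 0*t)^2 - (xmax 0*t)^4/2 := by
        rw [xmax_zero, sqrt2_arg]
        have h2 : (0:ℝ) < t^2 := by nlinarith [abs_pos.mpr ht0, sq_abs t]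
        have h3 : (0:ℝ) < 1 - t^2 := by nlinarith [ht.1, h1]
        nlinarith [mul_pos h2 h3]
      have hden : Real.sqrt (2*0 + (xmax 0*t)^2 - (xmax 0*t)^4/2) ≠ 0 :=
        (Real.sqrt_pos.mpr harg).ne'
      have hinner : ContinuousAt
          (fun h : ℝ => 2*h + (xmax h*t)^2 - (xmax h*t)^4/2) 0 := by
        apply ContinuousAt.sub
        apply ContinuousAt.add
        · exact (continuous_const.mul continuous_id).continuousAt
        · exact (((xmax_cont.mul continuous_const).pow 2)).continuousAt
        · exact (((xmax_cont.mul continuous_const).pow 4).div_const 2).continuousAt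
      have hcont : ContinuousAt (fun h : ℝ => Faux h t) 0 := by
        unfold Faux
        apply ContinuousAt.mul xmax_cont.continuousAt
        apply ContinuousAt.div
        · exact ((xmax_cont.mul continuous_const).pow 4).continuousAt
        · exact (Real.continuous_sqrt.continuousAt).comp hinner
        · exact hden
      exact hcont.tendsto.mono_left nhdsWithin_le_nhds

lemma Faux_bound {h t : ℝ} (h0 : 0 ≤ h) (h1 : h ≤ 1) (ht : t ∈ Ioc (-1:ℝ) 1) :
    ‖Faux h t‖ ≤ 12 * (1 / Real.sqrt (1 - t^2)) := by
  have hF0 : 0 ≤ Faux h t := by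
    unfold Faux
    exact mul_nonneg (xmax_nonneg h)
      (div_nonneg (by positivity) (Real.sqrt_nonneg _))
  rw [Real.norm_eq_abs, abs_of_nonneg hF0]
  rcases eq_or_lt_of_le ht.2 with he | hlt
  · subst he
    rw [Faux_one h0]
    norm_num
  rcases eq_or_ne t 0 with ht0 | ht0
  · subst ht0
    rw [Faux_zero_eval]
    positivity
  -- main case
  have ha1 := xmax_ge_one h0
  have ha2 := xmax_le_two h0 h1
  have ha0 : (0:ℝ) < xmax h := by linarith
  have hs1 := sqrt14_ge h0
  have htt : (0:ℝ) < 1 - t^2 := by nlinarith [ht.1, hlt]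
  have habs : (0:ℝ) < |t| := abs_pos.mpr ht0
  have hu : (0:ℝ) < Real.sqrt (1 - t^2) := Real.sqrt_pos.mpr htt
  set a := xmax h with hadef
  set u := Real.sqrt (1 - t^2) with hudef
  have hu2 : u^2 = 1 - t^2 := Real.sq_sqrt htt.le
  -- P ≤ D
  have hPle : (a^2 * |t| * u)^2/2 ≤ 2*h + (a*t)^2 - (a*t)^4/2 := by
    rw [D_factor h0]
    have e : (a^2 * |t| * u)^2/2 = a^2/2 * (1-t^2) * (a^2*t^2) := by
      rw [mul_pow, mul_pow, hu2, sq_abs]; ring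
    rw [e]
    have : 0 ≤ a^2/2 * (1-t^2) * (Real.sqrt (1+4*h) - 1) := by
      apply mul_nonneg (mul_nonneg (by positivity) htt.le) (by linarith)
    nlinarith [this]
  have hPpos : (0:ℝ) < (a^2 * |t| * u)^2/2 := by positivity
  have hsqrtP : Real.sqrt ((a^2 * |t| * u)^2/2) = a^2 * |t| * u / Real.sqrt 2 := by
    rw [Real.sqrt_div' _ (by norm_num), Real.sqrt_sq (by positivity)]
  have hden_ge : a^2 * |t| * u / Real.sqrt 2 ≤ Real.sqrt (2*h + (a*t)^2 - (a*t)^4/2) := by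
    rw [← hsqrtP]; exact Real.sqrt_le_sqrt hPle
  have hdenpos : (0:ℝ) < a^2 * |t| * u / Real.sqrt 2 := by
    have : (0:ℝ) < Real.sqrt 2 := Real.sqrt_pos.mpr (by norm_num)
    positivity
  have hstep1 : Faux h t ≤ a * ((a*t)^4 / (a^2 * |t| * u / Real.sqrt 2)) := by
    unfold Faux
    rw [← hadef]
    have hdd : (a*t)^4 / Real.sqrt (2*h + (a*t)^2 - (a*t)^4/2)
        ≤ (a*t)^4 / (a^2 * |t| * u / Real.sqrt 2) :=
      div_le_div_of_nonneg_left (by positivity : (0:ℝ) ≤ (a*t)^4) hdenpos hden_ge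
    exact mul_le_mul_of_nonneg_left hdd ha0.le
  have hs2 : (0:ℝ) < Real.sqrt 2 := Real.sqrt_pos.mpr (by norm_num)
  have hs2le : Real.sqrt 2 ≤ 3/2 := by
    nlinarith [sqrt_two_sq, hs2]
  have ht4 : t^4 = |t|^4 := by rw [pow_abs, abs_of_nonneg (by positivity)]
  have hstep2 : a * ((a*t)^4 / (a^2 * |t| * u / Real.sqrt 2)) = Real.sqrt 2 * a^3 * |t|^3 / u := by
    rw [mul_pow, ht4]
    field_simp
  have habale : |t| ≤ 1 := abs_le.mpr ⟨ht.1.le, hlt.le⟩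
  have hfin : Real.sqrt 2 * a^3 * |t|^3 / u ≤ 12 * (1/u) := by
    rw [div_le_iff₀ hu]
    have h8 : a^3 ≤ 8 := by
      have := pow_le_pow_left₀ (by linarith : (0:ℝ) ≤ a) ha2 3
      norm_num at this; linarith
    have habs3 : |t|^3 ≤ 1 := pow_le_one₀ (abs_nonneg t) habale
    have hA : Real.sqrt 2 * a^3 ≤ (3/2)*8 :=
      mul_le_mul hs2le h8 (by positivity) (by norm_num)
    have hB : Real.sqrt 2 * a^3 * |t|^3 ≤ 12*1 :=
      mul_le_mul (by linarith) habs3 (by positivity) (by norm_num)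
    calc Real.sqrt 2 * a^3 * |t|^3 ≤ 12 := by linarith
    _ = 12 * (1/u) * u := by field_simp
  linarith [hstep1, hstep2.le, hfin, hstep2.ge]

lemma bound_int :
    IntervalIntegrable (fun t : ℝ => 12 * (1 / Real.sqrt (1 - t^2))) volume (-1) 1 :=
  intInt_one_div_sqrt.const_mul 12

lemma abs_cube_meas (a b : ℝ) :
    AEStronglyMeasurable (fun t : ℝ => 4*|t|^3 / Real.sqrt (1 - t^2))
      (volume.restrict (Set.uIoc a b)) :=
  (((continuous_const.mul ((continuous_abs).pow 3)).measurable).div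
    ((Real.continuous_sqrt.comp (by continuity)).measurable)).aestronglyMeasurable

lemma abs_cube_int01 :
    IntervalIntegrable (fun t : ℝ => 4*|t|^3 / Real.sqrt (1 - t^2)) volume 0 1 := by
  have hsub : uIcc (0:ℝ) 1 ⊆ uIcc (-1:ℝ) 1 := by
    rw [uIcc_of_le (by norm_num : (0:ℝ) ≤ 1), uIcc_of_le (by norm_num : (-1:ℝ) ≤ 1)]
    exact Icc_subset_Icc (by norm_num) le_rfl
  have hb := bound_int.mono_set hsub
  refine hb.mono_fun (abs_cube_meas 0 1) ?_
  · rw [Filter.EventuallyLE, MeasureTheory.ae_restrict_iff' measurableSet_uIoc]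
    refine Eventually.of_forall fun t ht => ?_
    rw [uIoc_of_le (by norm_num : (0:ℝ) ≤ 1)] at ht
    have habs : |t| ≤ 1 := abs_le.mpr ⟨by linarith [ht.1], ht.2⟩
    have h3 : |t|^3 ≤ 1 := pow_le_one₀ (abs_nonneg t) habs
    have hsq : (0:ℝ) ≤ Real.sqrt (1 - t^2) := Real.sqrt_nonneg _
    rw [Real.norm_of_nonneg (by positivity), Real.norm_of_nonneg (by positivity),
      mul_one_div]
    rcases eq_or_lt_of_le hsq with he | hlt
    · rw [← he, div_zero, div_zero]
    · rw [div_le_div_iff_of_pos_right hlt]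
      linarith


lemma abs_cube_int_neg :
    IntervalIntegrable (fun t : ℝ => 4*|t|^3 / Real.sqrt (1 - t^2)) volume (-1) 0 := by
  have := (IntervalIntegrable.iff_comp_neg (by simp)).mp abs_cube_int01
  simp only [neg_zero] at this
  have h2 : (fun x : ℝ => 4*|(-x)|^3 / Real.sqrt (1 - (-x)^2))
      = fun t : ℝ => 4*|t|^3 / Real.sqrt (1 - t^2) := by
    funext x; rw [abs_neg, show (-x)^2 = x^2 by ring]
  rw [h2] at this
  exact this.symm

lemma abs_cube_even :
    (∫ t in (-1:ℝ)..0, 4*|t|^3 / Real.sqrt (1 - t^2))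
      = ∫ t in (0:ℝ)..1, 4*|t|^3 / Real.sqrt (1 - t^2) := by
  have := intervalIntegral.integral_comp_neg (a := (0:ℝ)) (b := 1)
    (fun t : ℝ => 4*|t|^3 / Real.sqrt (1 - t^2))
  simp only [neg_zero] at this
  rw [← this]
  apply intervalIntegral.integral_congr
  intro x _
  show 4*|(-x)|^3 / Real.sqrt (1 - (-x)^2) = 4*|x|^3 / Real.sqrt (1 - x^2)
  rw [abs_neg, show (-x)^2 = x^2 by ring]

lemma ftc_right :
    (∫ t in (0:ℝ)..1, 4*|t|^3 / Real.sqrt (1 - t^2)) = 8/3 := by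
  have hc : EqOn (fun t : ℝ => 4*|t|^3 / Real.sqrt (1 - t^2))
      (fun t : ℝ => 4*t^3 / Real.sqrt (1 - t^2)) (uIcc 0 1) := by
    intro t ht
    rw [uIcc_of_le (by norm_num)] at ht
    show 4*|t|^3 / Real.sqrt (1 - t^2) = 4*t^3 / Real.sqrt (1 - t^2)
    rw [abs_of_nonneg ht.1]
  rw [intervalIntegral.integral_congr hc]
  have hint : IntervalIntegrable (fun t : ℝ => 4*t^3 / Real.sqrt (1 - t^2)) volume 0 1 := by
    refine abs_cube_int01.mono_fun ?_ ?_
    · exact ((continuous_const.mul (continuous_pow 3)).measurable.div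
        ((Real.continuous_sqrt.comp (by continuity)).measurable)).aestronglyMeasurable
    · rw [Filter.EventuallyLE, MeasureTheory.ae_restrict_iff' measurableSet_uIoc]
      refine Eventually.of_forall fun t ht => ?_
      rw [uIoc_of_le (by norm_num : (0:ℝ) ≤ 1)] at ht
      rw [abs_of_nonneg ht.1.le]
  have hΦcont : ContinuousOn (fun t : ℝ => -(4/3)*(2+t^2)*Real.sqrt (1-t^2)) (Icc 0 1) := by
    apply Continuous.continuousOn
    exact (continuous_const.mul (continuous_const.add (continuous_pow 2))).mul
      (Real.continuous_sqrt.comp (by continuity))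
  have hderiv : ∀ t ∈ Ioo (0:ℝ) 1,
      HasDerivWithinAt (fun t : ℝ => -(4/3)*(2+t^2)*Real.sqrt (1-t^2))
        (4*t^3 / Real.sqrt (1-t^2)) (Ioi t) t := by
    intro t ht
    have h1t : (0:ℝ) < 1 - t^2 := by nlinarith [ht.1, ht.2]
    have hne : Real.sqrt (1-t^2) ≠ 0 := (Real.sqrt_pos.mpr h1t).ne'
    have hw : Real.sqrt (1-t^2) * Real.sqrt (1-t^2) = 1 - t^2 := Real.mul_self_sqrt h1t.le
    have hinner : HasDerivAt (fun y : ℝ => 1 - y^2) (-(2*t)) t := by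
      have := (hasDerivAt_pow 2 t).const_sub 1
      simpa using this.congr_deriv (by ring)
    have hs := (Real.hasDerivAt_sqrt h1t.ne').comp t hinner
    have hq : HasDerivAt (fun y : ℝ => -(4/3)*(2+y^2)) (-(4/3)*(2*t)) t := by
      have := ((hasDerivAt_pow 2 t).const_add 2).const_mul (-(4/3):ℝ)
      simpa using this.congr_deriv (by ring)
    have hprod := hq.mul hs
    have heq : -(4/3)*(2*t) * ((fun y : ℝ => Real.sqrt (1-y^2)) t)
        + (-(4/3)*(2+t^2)) * (1 / (2 * Real.sqrt (1-t^2)) * -(2*t))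
        = 4*t^3 / Real.sqrt (1-t^2) := by
      field_simp
      linear_combination (-2*t) * hw
    exact (hprod.congr_deriv heq).hasDerivWithinAt
  rw [intervalIntegral.integral_eq_sub_of_hasDeriv_right_of_le (by norm_num)
    hΦcont hderiv hint]
  norm_num

lemma intFaux0 : (∫ t in (-1:ℝ)..1, Faux 0 t) = 16/3 := by
  have hcongr : EqOn (fun t => Faux 0 t)
      (fun t : ℝ => 4*|t|^3 / Real.sqrt (1 - t^2)) (uIcc (-1:ℝ) 1) := by
    intro t ht
    rw [uIcc_of_le (by norm_num : (-1:ℝ) ≤ 1)] at ht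
    exact Faux_zero ht
  rw [intervalIntegral.integral_congr hcongr]
  have hadd := intervalIntegral.integral_add_adjacent_intervals abs_cube_int_neg abs_cube_int01
  rw [← hadd, abs_cube_even, ftc_right]
  norm_num

lemma ellI'_tendsto :
    Tendsto (ellI' 4) (nhdsWithin 0 (Ioi 0)) (nhds (16/3)) := by
  have hmem : Ioc (0:ℝ) 1 ∈ nhdsWithin (0:ℝ) (Ioi 0) :=
    Ioc_mem_nhdsGT_of_mem ⟨le_refl 0, one_pos⟩
  have hmain : Tendsto (fun h => ∫ t in (-1:ℝ)..1, Faux h t) (nhdsWithin 0 (Ioi 0))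
      (nhds (∫ t in (-1:ℝ)..1, Faux 0 t)) := by
    apply intervalIntegral.tendsto_integral_filter_of_dominated_convergence
      (bound := fun t => 12 * (1 / Real.sqrt (1 - t^2)))
    · filter_upwards with h
      apply Measurable.aestronglyMeasurable
      unfold Faux
      apply Measurable.mul measurable_const
      apply Measurable.div
      · exact ((continuous_const.mul continuous_id).pow 4).measurable
      · exact (Real.continuous_sqrt.comp (by continuity)).measurable
    · filter_upwards [hmem] with h hh
      refine Eventually.of_forall fun t ht => ?_
      rw [uIoc_of_le (by norm_num : (-1:ℝ) ≤ 1)] at ht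
      exact Faux_bound hh.1.le hh.2 ht
    · exact bound_int
    · refine Eventually.of_forall fun t ht => ?_
      rw [uIoc_of_le (by norm_num : (-1:ℝ) ≤ 1)] at ht
      exact Faux_tendsto ht
  rw [intFaux0] at hmain
  refine Tendsto.congr' ?_ hmain
  filter_upwards [hmem] with h hh
  exact (ellI'_eq hh.1.le).symm

lemma val0 : (∫ x in (-2:ℝ)..2, x^0 * Real.sqrt (2*0 + x^2 - x^4/2)) = 4/3 := by
  rw [← ellI_eq_fixed 0 le_rfl zero_le_one, ellI, xmax_zero, even_reduce 0]
  have h2 : (∫ x in (0:ℝ)..(Real.sqrt 2), (-x)^0 * Real.sqrt (2*0 + x^2 - x^4/2))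
      = ∫ x in (0:ℝ)..(Real.sqrt 2), x^0 * Real.sqrt (2*0 + x^2 - x^4/2) := by
    apply intervalIntegral.integral_congr
    intro x _
    show (-x)^0 * Real.sqrt (2*0 + x^2 - x^4/2) = x^0 * Real.sqrt (2*0 + x^2 - x^4/2)
    norm_num
  rw [h2, half_val0]
  norm_num

lemma val2 : (∫ x in (-2:ℝ)..2, x^2 * Real.sqrt (2*0 + x^2 - x^4/2)) = 16/15 := by
  rw [← ellI_eq_fixed 2 le_rfl zero_le_one, ellI, xmax_zero, even_reduce 2]
  have h2 : (∫ x in (0:ℝ)..(Real.sqrt 2), (-x)^2 * Real.sqrt (2*0 + x^2 - x^4/2))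
      = ∫ x in (0:ℝ)..(Real.sqrt 2), x^2 * Real.sqrt (2*0 + x^2 - x^4/2) := by
    apply intervalIntegral.integral_congr
    intro x _
    show (-x)^2 * Real.sqrt (2*0 + x^2 - x^4/2) = x^2 * Real.sqrt (2*0 + x^2 - x^4/2)
    rw [show (-x)^2 = x^2 by ring]
  rw [h2, half_val2]
  norm_num

/-- Limits at the figure-eight: `I₀ → 4/3`, `I₂ → 16/15`, `I₄' → 16/3` as `h → 0⁺`. -/
theorem ellI_limits_at_loop :
    Tendsto (ellI 0) (nhdsWithin 0 (Ioi 0)) (nhds (4/3)) ∧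
    Tendsto (ellI 2) (nhdsWithin 0 (Ioi 0)) (nhds (16/15)) ∧
    Tendsto (ellI' 4) (nhdsWithin 0 (Ioi 0)) (nhds (16/3)) := by
  refine ⟨?_, ?_, ellI'_tendsto⟩
  · have := ellI_tendsto 0 (by norm_num)
    rwa [val0] at this
  · have := ellI_tendsto 2 (by norm_num)
    rwa [val2] at this
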